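/- arXiv:2212.10329 — 7 statements merged into one kernel-verified Lean document; each statement's English description precedes it below -/
import Mathlib

section
/- Let ρ : F_2 → GL(2, ℤ) be the homomorphism determined by ρ(X_1) = [[1, 2], [0, 1]] and ρ(X_2) = [[1, 0], [2, 1]], and fix a natural number p ≥ 2. For every w ∈ F_2 with w ≠ 1 there exists N ≥ 1 such that the entrywise reduction of ρ(w) modulo p^N is not the identity in GL(2, ℤ/p^Nℤ). Equivalently, the intersection over all N ≥ 1 of the normal subgroups G_N := ρ^{−1}(Γ(2, p^N ℤ)) of F_2 is the trivial subgroup. -/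
/-- The matrix `[[1, 2], [0, 1]]` as an element of `GL(2, ℤ)`. -/
def stmt7M1 : Matrix.GeneralLinearGroup (Fin 2) ℤ :=
  ⟨!![1, 2; 0, 1], !![1, -2; 0, 1], by decide, by decide⟩

/-- The matrix `[[1, 0], [2, 1]]` as an element of `GL(2, ℤ)`. -/
def stmt7M2 : Matrix.GeneralLinearGroup (Fin 2) ℤ :=
  ⟨!![1, 0; 2, 1], !![1, 0; -2, 1], by decide, by decide⟩

abbrev PPV := {v : Fin 2 → ℤ // v ≠ 0}

instance : SMul (Matrix.GeneralLinearGroup (Fin 2) ℤ) PPV where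
  smul g v := ⟨(g : Matrix (Fin 2) (Fin 2) ℤ).mulVec v.1, by
    intro h
    apply v.2
    have h2 := congrArg (fun w => ((g⁻¹ : Matrix.GeneralLinearGroup (Fin 2) ℤ) :
        Matrix (Fin 2) (Fin 2) ℤ).mulVec w) h
    simpa only [Matrix.mulVec_mulVec, ← Units.val_mul, inv_mul_cancel, Units.val_one,
      Matrix.one_mulVec, Matrix.mulVec_zero] using h2⟩

lemma ppv_smul (g : Matrix.GeneralLinearGroup (Fin 2) ℤ) (v : PPV) :
    (g • v).1 = (g : Matrix (Fin 2) (Fin 2) ℤ).mulVec v.1 := rfl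

instance : MulAction (Matrix.GeneralLinearGroup (Fin 2) ℤ) PPV where
  one_smul v := Subtype.ext (by rw [ppv_smul]; simp)
  mul_smul g h v := Subtype.ext (by
    rw [ppv_smul, ppv_smul, ppv_smul, Matrix.mulVec_mulVec, ← Units.val_mul])

lemma ppv_ne (v : PPV) : v.1 0 ≠ 0 ∨ v.1 1 ≠ 0 := by
  by_contra h
  push_neg at h
  exact v.2 (funext fun i => by fin_cases i <;> simp [h.1, h.2])

def ppX : Fin 2 → Set PPV :=
  ![{v | v.1 1 * v.1 1 ≤ v.1 0 * v.1 1},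
    {v | v.1 0 = 0 ∨ v.1 0 * v.1 0 < v.1 0 * v.1 1}]

def ppY : Fin 2 → Set PPV :=
  ![{v | v.1 0 * v.1 1 < -(v.1 1 * v.1 1)},
    {v | v.1 0 * v.1 1 ≤ -(v.1 0 * v.1 0) ∧ v.1 0 ≠ 0}]

set_option maxHeartbeats 1000000 in
lemma ppXdisj : Disjoint (ppX 0) (ppX 1) := by
  rw [Set.disjoint_left]
  intro v h1 h2
  simp only [ppX, Set.mem_setOf_eq, Matrix.cons_val_zero, Matrix.cons_val_one,
    Matrix.head_cons] at h1 h2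
  rcases h2 with h2 | h2
  · rcases ppv_ne v with h | h
    · exact h h2
    · rw [h2] at h1
      nlinarith [mul_self_pos.mpr h]
  · nlinarith

lemma ppYdisj : Disjoint (ppY 0) (ppY 1) := by
  rw [Set.disjoint_left]
  intro v h1 h2
  simp only [ppY, Set.mem_setOf_eq, Matrix.cons_val_zero, Matrix.cons_val_one,
    Matrix.head_cons] at h1 h2
  nlinarith [h2.1]

lemma ppXYdisj : ∀ i j, Disjoint (ppX i) (ppY j) := by
  intro i j
  rw [Set.disjoint_left]
  intro v h1 h2
  fin_cases i <;> fin_cases j <;>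
    simp only [ppX, ppY, Fin.mk_zero, Fin.mk_one, Set.mem_setOf_eq, Matrix.cons_val_zero,
      Matrix.cons_val_one, Matrix.head_cons] at h1 h2
  · nlinarith
  · nlinarith [h2.1, mul_self_pos.mpr h2.2]
  · rcases h1 with h1 | h1
    · rw [h1] at h2; nlinarith
    · nlinarith
  · rcases h1 with h1 | h1
    · exact h2.2 h1
    · nlinarith [h2.1]

theorem sanov_inj : Function.Injective (FreeGroup.lift ![stmt7M1, stmt7M2]) := by
  apply FreeGroup.injective_lift_of_ping_pong ![stmt7M1, stmt7M2] ppX ppY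
  · intro i
    fin_cases i
    · exact ⟨⟨![1, 0], by decide⟩, by simp [ppX]⟩
    · exact ⟨⟨![0, 1], by decide⟩, by simp [ppX]⟩
  · intro i j hij
    fin_cases i <;> fin_cases j <;> simp_all [Function.onFun]
    · exact ppXdisj
    · exact ppXdisj.symm
  · intro i j hij
    fin_cases i <;> fin_cases j <;> simp_all [Function.onFun]
    · exact ppYdisj
    · exact ppYdisj.symm
  · exact ppXYdisj
  · intro i
    rintro _ ⟨u, hu, rfl⟩
    fin_cases i
    · simp only [ppX, ppY, Fin.mk_zero, Set.mem_compl_iff, Set.mem_setOf_eq,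
        Matrix.cons_val_zero, Matrix.cons_val_one, Matrix.head_cons, not_lt] at hu ⊢
      rw [ppv_smul]
      simp only [stmt7M1, Units.val_mk, Matrix.mulVec, dotProduct, Fin.sum_univ_two]
      norm_num
      nlinarith
    · simp only [ppX, ppY, Fin.mk_one, Set.mem_compl_iff, Set.mem_setOf_eq,
        Matrix.cons_val_zero, Matrix.cons_val_one, Matrix.head_cons, not_and, not_le,
        ne_eq, not_not] at hu ⊢
      rw [ppv_smul]
      simp only [stmt7M2, Units.val_mk, Matrix.mulVec, dotProduct, Fin.sum_univ_two]
      norm_num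
      rcases eq_or_ne (u.1 0) 0 with h | h
      · exact Or.inl h
      · right
        have h2 : ¬(u.1 0 * u.1 1 ≤ -(u.1 0 * u.1 0)) := fun hle => h (hu hle)
        push_neg at h2
        nlinarith
  · intro i
    rintro _ ⟨u, hu, rfl⟩
    fin_cases i
    · simp only [ppX, ppY, Fin.mk_zero, Set.mem_compl_iff, Set.mem_setOf_eq,
        Matrix.cons_val_zero, Matrix.cons_val_one, Matrix.head_cons, not_le,
        Pi.inv_apply] at hu ⊢
      rw [ppv_smul]
      simp only [stmt7M1, Units.inv_mk, Units.val_mk, Matrix.mulVec, dotProduct,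
        Fin.sum_univ_two]
      norm_num
      nlinarith
    · simp only [ppX, ppY, Fin.mk_one, Set.mem_compl_iff, Set.mem_setOf_eq,
        Matrix.cons_val_zero, Matrix.cons_val_one, Matrix.head_cons, not_or, not_lt,
        ne_eq, Pi.inv_apply] at hu ⊢
      rw [ppv_smul]
      simp only [stmt7M2, Units.inv_mk, Units.val_mk, Matrix.mulVec, dotProduct,
        Fin.sum_univ_two]
      norm_num
      constructor
      · nlinarith [hu.2]
      · exact hu.1

lemma entry_ne (w : FreeGroup (Fin 2)) (hw : w ≠ 1) :
    ∃ i j, ((FreeGroup.lift ![stmt7M1, stmt7M2] w : Matrix (Fin 2) (Fin 2) ℤ) i j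
      - (1 : Matrix (Fin 2) (Fin 2) ℤ) i j) ≠ 0 := by
  by_contra h
  push_neg at h
  apply hw
  apply sanov_inj
  rw [map_one]
  ext i j
  have := h i j
  rw [sub_eq_zero] at this
  simpa using this

lemma pow_gt (p : ℕ) (hp : 2 ≤ p) (d : ℤ) (hd : d ≠ 0) :
    |d| < (p : ℤ) ^ d.natAbs := by
  have h1 : d.natAbs < 2 ^ d.natAbs := Nat.lt_two_pow_self
  have h2 : 2 ^ d.natAbs ≤ p ^ d.natAbs := Nat.pow_le_pow_left hp _
  have : (d.natAbs : ℤ) < (p : ℤ) ^ d.natAbs := by exact_mod_cast lt_of_lt_of_le h1 h2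
  rwa [Int.abs_eq_natAbs]

lemma not_dvd_pow (p : ℕ) (hp : 2 ≤ p) (d : ℤ) (hd : d ≠ 0) :
    ∃ N : ℕ, 1 ≤ N ∧ ¬ ((p : ℤ) ^ N ∣ d) := by
  refine ⟨d.natAbs, by omega, fun hdvd => ?_⟩
  have h1 := Int.le_of_dvd (abs_pos.mpr hd) ((dvd_abs _ _).mpr hdvd)
  have h2 := pow_gt p hp d hd
  omega

/-- Let `ρ : F_2 → GL(2, ℤ)` be the homomorphism with `ρ(X_1) = [[1,2],[0,1]]`,
`ρ(X_2) = [[1,0],[2,1]]`, and let `p ≥ 2`.  For every `w ≠ 1` in `F_2` there is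
`N ≥ 1` such that the reduction of `ρ(w)` modulo `p^N` is not the identity of
`GL(2, ℤ/p^Nℤ)`; equivalently, the intersection over `N ≥ 1` of the subgroups
`G_N = ρ⁻¹(Γ(2, p^N ℤ))` of `F_2` is trivial. -/
theorem stmt_7 (p : ℕ) (hp : 2 ≤ p) :
    (∀ w : FreeGroup (Fin 2), w ≠ 1 →
      ∃ N : ℕ, 1 ≤ N ∧
        Matrix.GeneralLinearGroup.map (Int.castRingHom (ZMod (p ^ N)))
          (FreeGroup.lift ![stmt7M1, stmt7M2] w) ≠ 1) ∧
    (⋂ (N : ℕ) (_ : 1 ≤ N),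
        {w : FreeGroup (Fin 2) |
          ∀ i j, ((FreeGroup.lift ![stmt7M1, stmt7M2] w : Matrix (Fin 2) (Fin 2) ℤ) i j
            - (1 : Matrix (Fin 2) (Fin 2) ℤ) i j) ∈ Ideal.span {(p : ℤ) ^ N}}
      = {1}) := by
  constructor
  · intro w hw
    obtain ⟨i, j, hd⟩ := entry_ne w hw
    obtain ⟨N, hN, hnd⟩ := not_dvd_pow p hp _ hd
    refine ⟨N, hN, fun h => hnd ?_⟩
    have h2 := congrArg (fun g : Matrix.GeneralLinearGroup (Fin 2) (ZMod (p ^ N)) =>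
      (g : Matrix (Fin 2) (Fin 2) (ZMod (p ^ N))) i j) h
    simp only [Matrix.GeneralLinearGroup.map, Units.coe_map, MonoidHom.coe_coe,
      Units.val_one] at h2
    have h2' : (((FreeGroup.lift ![stmt7M1, stmt7M2] w : Matrix (Fin 2) (Fin 2) ℤ) i j : ℤ)
        : ZMod (p ^ N)) = (1 : Matrix (Fin 2) (Fin 2) (ZMod (p ^ N))) i j := h2
    have h3 : ((((FreeGroup.lift ![stmt7M1, stmt7M2] w : Matrix (Fin 2) (Fin 2) ℤ) i j
        - (1 : Matrix (Fin 2) (Fin 2) ℤ) i j : ℤ)) : ZMod (p ^ N)) = 0 := by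
      push_cast
      rw [sub_eq_zero, h2']
      fin_cases i <;> fin_cases j <;> simp [Matrix.one_apply]
    have := (ZMod.intCast_zmod_eq_zero_iff_dvd _ _).mp h3
    exact_mod_cast this
  · ext w
    simp only [Set.mem_iInter, Set.mem_setOf_eq, Set.mem_singleton_iff]
    constructor
    · intro h
      by_contra hw
      obtain ⟨i, j, hd⟩ := entry_ne w hw
      obtain ⟨N, hN, hnd⟩ := not_dvd_pow p hp _ hd
      exact hnd (Ideal.mem_span_singleton.mp (h N hN i j))
    · rintro rfl
      intro N _ i j
      simp only [map_one, Units.val_one, sub_self]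
      exact Ideal.zero_mem _
end

section
/- (Residual finiteness of finitely generated linear groups) Let G be a finitely generated group, F a field, n ≥ 1, and suppose there exists an injective group homomorphism G → GL(n, F). Then G is residually finite: for every g ∈ G with g ≠ 1 there exist a finite group H and a group homomorphism θ : G → H such that θ(g) ≠ 1. -/
set_option maxHeartbeats 1000000 in
instance : IsJacobsonRing ℤ := by
  rw [isJacobsonRing_iff_prime_eq]
  intro P hP
  by_cases hbot : P = ⊥
  · subst hbot
    refine le_antisymm ?_ Ideal.le_jacobson
    intro x hx
    rw [Ideal.mem_jacobson_bot] at hx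
    rw [Ideal.mem_bot]
    rcases Int.isUnit_iff.mp (hx x) with h | h
    · have hxx : x * x = 0 := by linarith
      exact mul_self_eq_zero.mp hxx
    · nlinarith [mul_self_nonneg x]
  · haveI := hP
    haveI : P.IsMaximal := IsPrime.to_maximal_ideal hbot
    exact le_antisymm (sInf_le ⟨le_rfl, ‹P.IsMaximal›⟩) Ideal.le_jacobson

set_option maxHeartbeats 2000000 in
set_option synthInstance.maxHeartbeats 200000 in
/-- (Residual finiteness of finitely generated linear groups) If a finitely
generated group `G` admits an injective homomorphism into `GL(n, F)` for a field
`F` and `n ≥ 1`, then `G` is residually finite: for every `g ≠ 1` there are a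
finite group `H` and a homomorphism `θ : G → H` with `θ(g) ≠ 1`. -/
theorem stmt_8 (G : Type*) [Group G] [Group.FG G] (F : Type*) [Field F] (n : ℕ)
    (hn : 1 ≤ n)
    (hinj : ∃ φ : G →* Matrix.GeneralLinearGroup (Fin n) F, Function.Injective φ) :
    ∀ g : G, g ≠ 1 →
      ∃ (H : Type) (_ : Group H) (_ : Finite H) (θ : G →* H), θ g ≠ 1 := by
  classical
  obtain ⟨φ, hφ⟩ := hinj
  obtain ⟨S, hScl, hSfin⟩ := Group.fg_iff.mp ‹Group.FG G›
  -- the set of all matrix entries of `φ s` and `(φ s)⁻¹` for `s ∈ S`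
  set T : Set F := (⋃ s ∈ S, Set.range fun p : Fin n × Fin n =>
      ((φ s : (Matrix (Fin n) (Fin n) F)ˣ) : Matrix (Fin n) (Fin n) F) p.1 p.2) ∪
    (⋃ s ∈ S, Set.range fun p : Fin n × Fin n =>
      (((φ s)⁻¹ : (Matrix (Fin n) (Fin n) F)ˣ) : Matrix (Fin n) (Fin n) F) p.1 p.2) with hT
  have hTfin : T.Finite := by
    refine Set.Finite.union ?_ ?_ <;>
      exact Set.Finite.biUnion hSfin fun s _ => Set.finite_range _
  -- the finitely generated subring
  set A : Subalgebra ℤ F := Algebra.adjoin ℤ T with hA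
  have hAft : Algebra.FiniteType ℤ A := by
    rw [← Subalgebra.fg_iff_finiteType]
    exact ⟨hTfin.toFinset, by rw [hTfin.coe_toFinset]⟩
  -- all entries of all `φ g` lie in `A`
  have hmem : ∀ g : G, ∀ i j : Fin n,
      ((φ g : (Matrix (Fin n) (Fin n) F)ˣ) : Matrix (Fin n) (Fin n) F) i j ∈ A := by
    have key : ∀ g : G,
        (∀ i j, ((φ g : (Matrix (Fin n) (Fin n) F)ˣ) : Matrix (Fin n) (Fin n) F) i j ∈ A) ∧
        (∀ i j, (((φ g)⁻¹ : (Matrix (Fin n) (Fin n) F)ˣ) : Matrix (Fin n) (Fin n) F) i j ∈ A) := by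
      intro g
      have hg : g ∈ Subgroup.closure S := hScl ▸ Subgroup.mem_top g
      induction hg using Subgroup.closure_induction with
      | mem x hx =>
        constructor
        · intro i j
          exact Algebra.subset_adjoin (Or.inl (Set.mem_biUnion hx ⟨(i, j), rfl⟩))
        · intro i j
          exact Algebra.subset_adjoin (Or.inr (Set.mem_biUnion hx ⟨(i, j), rfl⟩))
      | one =>
        constructor <;>
        · intro i j
          simp only [map_one, inv_one, Units.val_one, Matrix.one_apply]
          split
          · exact A.one_mem
          · exact A.zero_mem
      | mul x y hx hy ihx ihy =>
        constructor
        · intro i j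
          rw [map_mul, Units.val_mul, Matrix.mul_apply]
          exact Subalgebra.sum_mem A fun k _ => A.mul_mem (ihx.1 i k) (ihy.1 k j)
        · intro i j
          rw [map_mul, mul_inv_rev, Units.val_mul, Matrix.mul_apply]
          exact Subalgebra.sum_mem A fun k _ => A.mul_mem (ihy.2 i k) (ihx.2 k j)
      | inv x hx ihx =>
        refine ⟨?_, ?_⟩
        · simp only [map_inv]; exact ihx.2
        · simp only [map_inv, inv_inv]; exact ihx.1
    exact fun g => (key g).1
  -- `A` is a Jacobson domain
  haveI : IsJacobsonRing A := isJacobsonRing_of_finiteType (A := ℤ)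
  -- the entrywise matrix in `A`
  set f : G → Matrix (Fin n) (Fin n) A := fun g i j =>
    ⟨((φ g : (Matrix (Fin n) (Fin n) F)ˣ) : Matrix (Fin n) (Fin n) F) i j, hmem g i j⟩ with hf
  have hmapf : ∀ g : G, (A.val.toRingHom.mapMatrix : Matrix (Fin n) (Fin n) A →+* Matrix (Fin n) (Fin n) F) (f g)
      = ((φ g : (Matrix (Fin n) (Fin n) F)ˣ) : Matrix (Fin n) (Fin n) F) := by
    intro g; ext i j; rfl
  have hinjmap : ∀ M N : Matrix (Fin n) (Fin n) A,
      (A.val.toRingHom.mapMatrix : Matrix (Fin n) (Fin n) A →+* Matrix (Fin n) (Fin n) F) M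
        = A.val.toRingHom.mapMatrix N → M = N := by
    intro M N h
    ext i j
    have h2 : A.val (M i j) = A.val (N i j) := congrFun (congrFun h i) j
    exact h2
  have hfmul : ∀ g h : G, f (g * h) = f g * f h := by
    intro g h
    apply hinjmap
    rw [map_mul (A.val.toRingHom.mapMatrix), hmapf, hmapf, hmapf, map_mul, Units.val_mul]
  have hfone : f 1 = 1 := by
    apply hinjmap
    rw [map_one (A.val.toRingHom.mapMatrix), hmapf, map_one, Units.val_one]
  -- lift to a homomorphism into the units of `Matrix A`
  set θ₀ : G →* (Matrix (Fin n) (Fin n) A)ˣ :=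
    { toFun := fun g => ⟨f g, f g⁻¹, by rw [← hfmul, mul_inv_cancel, hfone],
        by rw [← hfmul, inv_mul_cancel, hfone]⟩
      map_one' := by
        apply Units.ext
        show f 1 = 1
        exact hfone
      map_mul' := fun g h => by
        apply Units.ext
        show f (g * h) = f g * f h
        exact hfmul g h } with hθ₀
  -- the separating element of `A`
  intro g hg
  have hφg : ((φ g : (Matrix (Fin n) (Fin n) F)ˣ) : Matrix (Fin n) (Fin n) F)
      ≠ (1 : Matrix (Fin n) (Fin n) F) := by
    intro h
    exact hg (hφ (by ext : 1; rw [h, map_one, Units.val_one]))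
  obtain ⟨i, j, hij⟩ : ∃ i j, ((φ g : (Matrix (Fin n) (Fin n) F)ˣ) : Matrix (Fin n) (Fin n) F) i j
      ≠ (1 : Matrix (Fin n) (Fin n) F) i j := by
    by_contra h
    push_neg at h
    exact hφg (by ext i j; exact h i j)
  set a : A := f g i j - (1 : Matrix (Fin n) (Fin n) A) i j with ha
  have h1A : (((1 : Matrix (Fin n) (Fin n) A) i j : A) : F)
      = (1 : Matrix (Fin n) (Fin n) F) i j := by
    by_cases hij' : i = j <;> simp [Matrix.one_apply, hij']
  have ha0 : a ≠ 0 := by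
    intro h
    apply hij
    have hv : (a : F) = 0 := by rw [h]; exact rfl
    rw [ha, AddSubgroupClass.coe_sub, h1A] at hv
    have h2 : ((f g i j : A) : F)
        = ((φ g : (Matrix (Fin n) (Fin n) F)ˣ) : Matrix (Fin n) (Fin n) F) i j := rfl
    rw [h2] at hv
    exact sub_eq_zero.mp hv
  -- find a maximal ideal avoiding `a`
  have hjac : (⊥ : Ideal A).jacobson = ⊥ :=
    ‹IsJacobsonRing A›.out (Ideal.isRadical_bot_of_noZeroDivisors)
  have hanotbot : a ∉ ((⊥ : Ideal A).jacobson) := by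
    rw [hjac]; simpa using ha0
  rw [Ideal.jacobson, Ideal.mem_sInf] at hanotbot
  push_neg at hanotbot
  obtain ⟨m, ⟨-, hmmax⟩, ham⟩ := hanotbot
  haveI : m.IsMaximal := hmmax
  -- the finite residue field
  set k := A ⧸ m with hk
  haveI : Algebra.FiniteType ℤ k :=
    haveI := hAft; Algebra.FiniteType.of_surjective (Ideal.Quotient.mkₐ ℤ m)
      (Ideal.Quotient.mkₐ_surjective ℤ m)
  haveI : Module.Finite ℤ k := by
    letI : Field k := Ideal.Quotient.field m
    exact finite_of_finite_type_of_isJacobsonRing ℤ k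
  haveI : Finite k := by
    haveI : Algebra.IsIntegral ℤ k := Algebra.IsIntegral.of_finite ℤ k
    have hint : (algebraMap ℤ k).IsIntegral := Algebra.isIntegral_def.mp ‹_›
    have hmax : ((⊥ : Ideal k).comap (algebraMap ℤ k)).IsMaximal := by
      letI : Field k := Ideal.Quotient.field m
      haveI : (⊥ : Ideal k).IsMaximal := Ideal.bot_isMaximal
      exact Ideal.isMaximal_comap_of_isIntegral_of_isMaximal' (algebraMap ℤ k) hint ⊥
    haveI := hmax
    have hne : ((⊥ : Ideal k).comap (algebraMap ℤ k)) ≠ ⊥ :=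
      (Ideal.bot_lt_of_maximal _ Int.not_isField).ne'
    obtain ⟨p, hpmem, hp0⟩ := Submodule.exists_mem_ne_zero_of_ne_bot hne
    have htors : Module.IsTorsion ℤ k := by
      intro x
      refine ⟨⟨p, mem_nonZeroDivisors_of_ne_zero hp0⟩, ?_⟩
      have hpk : (algebraMap ℤ k) p = 0 := by
        simpa using hpmem
      show p • x = 0
      have hcast : ((p : ℤ) : k) = algebraMap ℤ k p := by
        simp [algebraMap_int_eq]
      rw [zsmul_eq_mul, hcast, hpk, zero_mul]
    exact Module.finite_of_fg_torsion k htors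
  -- reduction mod `m` on matrices and units
  set ψ : Matrix (Fin n) (Fin n) A →+* Matrix (Fin n) (Fin n) k :=
    (Ideal.Quotient.mk m).mapMatrix with hψ
  set θ' : G →* (Matrix (Fin n) (Fin n) k)ˣ :=
    (Units.map (ψ.toMonoidHom)).comp θ₀ with hθ'
  have hθ'g : θ' g ≠ 1 := by
    intro h
    have hval : ψ (f g) = (1 : Matrix (Fin n) (Fin n) k) := by
      have := congrArg Units.val h
      simpa [hθ', hθ₀] using this
    have hentry : Ideal.Quotient.mk m (f g i j)
        = Ideal.Quotient.mk m ((1 : Matrix (Fin n) (Fin n) A) i j) := by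
      calc Ideal.Quotient.mk m (f g i j) = (ψ (f g)) i j := rfl
        _ = (1 : Matrix (Fin n) (Fin n) k) i j := by rw [hval]
        _ = Ideal.Quotient.mk m ((1 : Matrix (Fin n) (Fin n) A) i j) := by
            by_cases hij' : i = j <;> simp [Matrix.one_apply, hij']
    apply ham
    have : Ideal.Quotient.mk m a = 0 := by
      rw [ha, map_sub, hentry, sub_self]
    exact (Ideal.Quotient.eq_zero_iff_mem).mp this
  -- shrink to `Type 0`
  haveI : Finite (Matrix (Fin n) (Fin n) k)ˣ := inferInstance
  haveI : Small.{0} (Matrix (Fin n) (Fin n) k)ˣ := inferInstance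
  refine ⟨Shrink (Matrix (Fin n) (Fin n) k)ˣ, inferInstance, inferInstance,
    (MonoidHom.mk' (fun x => equivShrink _ x) (fun x y => equivShrink_mul x y)).comp θ', ?_⟩
  have h1 : equivShrink ((Matrix (Fin n) (Fin n) k)ˣ) 1 = 1 :=
    ((equivShrink _).apply_eq_iff_eq_symm_apply).mpr (equivShrink_symm_one).symm
  intro h
  exact hθ'g ((equivShrink _).injective (h.trans h1.symm))
end

section
/- Let G be a group and (G_N)_{N ∈ ℕ} a decreasing sequence of normal subgroups of G (G_{N+1} ≤ G_N) with ⋂_N G_N = {1}. Let φ_N : ℂG → ℂ[G/G_N] be the algebra homomorphism induced by the quotient map G → G/G_N. Then for every h ∈ ℂG and every n ∈ ℕ there exists N_0 such that for all N ≥ N_0, the coefficient of the identity in φ_N(h)^n (in ℂ[G/G_N]) equals the coefficient of the identity in h^n (in ℂG); i.e. the finite quotient approximations reproduce the moments 𝒯(h^n) exactly for sufficiently large N. -/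
/-- Let `(G_N)` be a decreasing sequence of normal subgroups of `G` with trivial
intersection, and let `φ_N : ℂG → ℂ[G/G_N]` be induced by the quotient maps.  For
every `h ∈ ℂG` and `n ∈ ℕ` there is `N₀` such that for all `N ≥ N₀` the coefficient
of the identity in `φ_N(h)^n` equals the coefficient of the identity in `h^n`:
the finite quotients reproduce the moments `𝒯(h^n)` exactly for large `N`. -/
theorem stmt_11 {G : Type*} [Group G] (Gs : ℕ → Subgroup G)
    (hnorm : ∀ N, (Gs N).Normal)
    (hdec : ∀ N, Gs (N + 1) ≤ Gs N)
    (hint : ⨅ N, Gs N = ⊥)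
    (h : MonoidAlgebra ℂ G) (n : ℕ) :
    ∃ N₀ : ℕ, ∀ N ≥ N₀,
      (letI := hnorm N;
        ((MonoidAlgebra.mapDomainRingHom ℂ (QuotientGroup.mk' (Gs N)) h) ^ n).coeff
          (1 : G ⧸ Gs N))
        = (h ^ n).coeff (1 : G) := by
  classical
  have hanti : Antitone Gs := antitone_nat_of_succ_le hdec
  set a := h ^ n with ha
  have key : ∀ g : G, g ≠ 1 → ∃ N, g ∉ Gs N := by
    intro g hg
    by_contra hc
    push_neg at hc
    have : g ∈ ⨅ N, Gs N := Subgroup.mem_iInf.mpr hc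
    rw [hint] at this
    exact hg this
  set F : G → ℕ := fun g => if hg : ∃ N, g ∉ Gs N then hg.choose else 0 with hF
  have hFspec : ∀ g : G, g ≠ 1 → g ∉ Gs (F g) := by
    intro g hg
    have hex := key g hg
    simp only [hF, dif_pos hex]
    exact hex.choose_spec
  refine ⟨a.coeff.support.sup F, fun N hN => ?_⟩
  letI := hnorm N
  show ((MonoidAlgebra.mapDomainRingHom ℂ (QuotientGroup.mk' (Gs N)) h) ^ n).coeff
      (1 : G ⧸ Gs N) = a.coeff 1
  rw [← map_pow, ← ha]
  have hmap : (MonoidAlgebra.mapDomainRingHom ℂ (QuotientGroup.mk' (Gs N)) a).coeff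
      (1 : G ⧸ Gs N)
      = ∑ g ∈ a.coeff.support, if ((QuotientGroup.mk' (Gs N)) g = 1) then a.coeff g else 0 := by
    show (Finsupp.mapDomain (QuotientGroup.mk' (Gs N)) a.coeff) 1 = _
    rw [Finsupp.mapDomain, Finsupp.sum_apply, Finsupp.sum]
    exact Finset.sum_congr rfl fun g _ => Finsupp.single_apply
  rw [hmap]
  have hcong : ∀ g ∈ a.coeff.support,
      (if ((QuotientGroup.mk' (Gs N)) g = 1) then a.coeff g else 0)
        = if g = 1 then a.coeff g else 0 := by
    intro g hg
    by_cases h1 : g = 1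
    · subst h1; simp
    · rw [if_neg h1, if_neg]
      intro hq
      have hmem : g ∈ Gs N := (QuotientGroup.eq_one_iff g).mp hq
      have : g ∉ Gs N := fun hm =>
        hFspec g h1 (hanti (le_trans (Finset.le_sup hg) hN) hm)
      exact this hmem
  rw [Finset.sum_congr rfl hcong, Finset.sum_ite_eq' a.coeff.support 1 (fun g => a.coeff g)]
  by_cases h1 : (1 : G) ∈ a.coeff.support
  · rw [if_pos h1]
  · rw [if_neg h1, eq_comm, ← Finsupp.notMem_support_iff]
    exact h1
end

section
/- (McKay) Let m ≥ 1, let F_m be the free group on m generators, let S be the symmetric set of the m generators and their inverses, and set v = 2m. Let N_e(n) be the number of n-tuples (s_1, …, s_n) ∈ S^n with s_1 ⋯ s_n = 1. Then N_e(n) = 0 for n odd, and for n even with n ≥ 2, n · N_e(n) = v · Σ_{k=0}^{n/2} C(n, k) · (n − 2k) · (v − 1)^k; equivalently N_e(n) = v Σ_{k=0}^{n/2} C(n,k) ((n−2k)/n) (v−1)^k. -/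
namespace McKay14

/-- ballot-type coefficients -/
def bal (n k : ℕ) : ℤ := if k = 0 then 1 else (n.choose k : ℤ) - n.choose (k - 1)

/-- partial weighted sums -/
def bsum (q : ℤ) (n K : ℕ) : ℤ := ∑ k ∈ Finset.range K, bal n k * q ^ k

/-- solution of the walk recursion on the `2m`-regular tree -/
def B (m : ℕ) : ℕ → ℕ → ℤ
  | 0, 0 => 1
  | 0, _ + 1 => 0
  | n + 1, 0 => 2 * m * B m n 1
  | n + 1, d + 1 => B m n d + (2 * (m : ℤ) - 1) * B m n (d + 2)

lemma shift_sum (q : ℤ) (F : ℕ → ℤ) (K : ℕ) :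
    ∑ k ∈ Finset.range (K + 1), (if k = 0 then 0 else F (k - 1)) * q ^ k
      = q * ∑ k ∈ Finset.range K, F k * q ^ k := by
  rw [Finset.sum_range_succ' (fun k => (if k = 0 then 0 else F (k - 1)) * q ^ k) K,
    Finset.mul_sum]
  simp only [Nat.succ_ne_zero, if_false, if_true, Nat.add_sub_cancel, zero_mul, add_zero]
  refine Finset.sum_congr rfl fun k _ => ?_
  ring

lemma bal_pascal (n k : ℕ) :
    bal (n + 1) k = bal n k + (if k = 0 then 0 else bal n (k - 1)) := by
  match k with
  | 0 => simp [bal]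
  | 1 => simp [bal, Nat.choose_one_right]
  | (j + 2) =>
    simp only [bal, if_neg (by omega : ¬ j + 2 = 0), if_neg (by omega : ¬ j + 1 = 0)]
    have h1 : (n + 1).choose (j + 2) = n.choose (j + 1) + n.choose (j + 2) :=
      Nat.choose_succ_succ _ _
    have h2 : (n + 1).choose (j + 1) = n.choose j + n.choose (j + 1) :=
      Nat.choose_succ_succ _ _
    push_cast [h1, h2]
    ring

lemma bsum_succ (q : ℤ) (n K : ℕ) :
    bsum q (n + 1) (K + 1) = bsum q n (K + 1) + q * bsum q n K := by
  simp only [bsum]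
  rw [← shift_sum q (fun k => bal n k) K, ← Finset.sum_add_distrib]
  refine Finset.sum_congr rfl fun k _ => ?_
  rw [bal_pascal]; ring

lemma bal_middle (K : ℕ) : bal (2 * K + 1) (K + 1) = 0 := by
  have h : (2 * K + 1).choose (K + 1) = (2 * K + 1).choose K := by
    have := Nat.choose_symm (n := 2 * K + 1) (k := K + 1) (by omega)
    rw [show 2 * K + 1 - (K + 1) = K by omega] at this
    exact this.symm
  simp [bal, h]

/-- Closed form for `B`. -/
lemma B_eq (m : ℕ) : ∀ n d : ℕ,
    B m n d = if d ≤ n ∧ n % 2 = d % 2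
      then bsum (2 * (m : ℤ) - 1) n ((n - d) / 2 + 1) else 0 := by
  intro n
  induction n with
  | zero =>
    intro d
    match d with
    | 0 => simp [B, bsum, bal]
    | d + 1 => simp [B]
  | succ n ih =>
    intro d
    match d with
    | 0 =>
      rw [show B m (n + 1) 0 = 2 * m * B m n 1 from rfl, ih 1]
      rcases Nat.even_or_odd n with he | ho
      · have h1 : n % 2 = 0 := Nat.even_iff.mp he
        rw [if_neg (by omega), if_neg (by omega), mul_zero]
      · have h1 : n % 2 = 1 := Nat.odd_iff.mp ho
        have hn1 : 1 ≤ n := by omega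
        rw [if_pos ⟨hn1, by omega⟩, if_pos ⟨by omega, by omega⟩]
        set K := n / 2 with hK
        have hnK : n = 2 * K + 1 := by omega
        have e1 : (n - 1) / 2 + 1 = K + 1 := by omega
        have e2 : (n + 1 - 0) / 2 + 1 = K + 2 := by omega
        rw [e1, e2, bsum_succ]
        have e3 : bsum (2 * (m : ℤ) - 1) n (K + 2) = bsum (2 * (m : ℤ) - 1) n (K + 1) := by
          rw [bsum, Finset.sum_range_succ, ← bsum, hnK, bal_middle, zero_mul, add_zero]
        rw [e3]
        ring
    | d + 1 =>
      rw [show B m (n + 1) (d + 1)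
          = B m n d + (2 * (m : ℤ) - 1) * B m n (d + 2) from rfl, ih d, ih (d + 2)]
      by_cases hc : d ≤ n ∧ n % 2 = d % 2
      · have hg : d + 1 ≤ n + 1 ∧ (n + 1) % 2 = (d + 1) % 2 := ⟨by omega, by omega⟩
        rw [if_pos hc, if_pos hg]
        rcases eq_or_lt_of_le hc.1 with hdn | hdn
        · subst hdn
          rw [if_neg (show ¬ (d + 2 ≤ d ∧ d % 2 = (d + 2) % 2) by omega)]
          rw [show (d + 1 - (d + 1)) / 2 + 1 = 1 by omega, show (d - d) / 2 + 1 = 1 by omega]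
          simp [bsum, bal]
        · have hd2 : d + 2 ≤ n := by omega
          rw [if_pos (show d + 2 ≤ n ∧ n % 2 = (d + 2) % 2 from ⟨hd2, by omega⟩)]
          have hKpos : 1 ≤ (n - d) / 2 := by omega
          rw [show (n + 1 - (d + 1)) / 2 + 1 = (n - d) / 2 + 1 by omega,
            show (n - (d + 2)) / 2 + 1 = (n - d) / 2 by omega]
          rw [show (n - d) / 2 + 1 = ((n - d) / 2 - 1) + 1 + 1 by omega, bsum_succ]
          rw [show (n - d) / 2 - 1 + 1 = (n - d) / 2 by omega]
      · have g1 : ¬(d + 1 ≤ n + 1 ∧ (n + 1) % 2 = (d + 1) % 2) := by omega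
        have g2 : ¬(d + 2 ≤ n ∧ n % 2 = (d + 2) % 2) := by omega
        rw [if_neg hc, if_neg g2, if_neg g1]
        ring

/-- McKay's reformulation at `d = 0`. -/
lemma B_zero_even (m n : ℕ) (hn : n % 2 = 0) :
    (n : ℤ) * B m n 0 = 2 * m * ∑ k ∈ Finset.range (n / 2 + 1),
      (n.choose k : ℤ) * ((n : ℤ) - 2 * k) * (2 * (m : ℤ) - 1) ^ k := by
  set K := n / 2 with hK
  have hnK : n = 2 * K := by omega
  rw [B_eq m n 0, if_pos ⟨Nat.zero_le _, by omega⟩, Nat.sub_zero, ← hK]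
  set f : ℕ → ℤ := fun k => (n.choose k : ℤ) * ((n : ℤ) - 2 * k) with hf
  set q : ℤ := 2 * (m : ℤ) - 1 with hq
  have htop : f K = 0 := by rw [hf]; simp only [hnK]; push_cast; ring
  have hshift : q * ∑ k ∈ Finset.range (K + 1), f k * q ^ k
      = ∑ k ∈ Finset.range (K + 1), (if k = 0 then 0 else f (k - 1)) * q ^ k := by
    rw [show (∑ k ∈ Finset.range (K + 1), f k * q ^ k)
        = (∑ k ∈ Finset.range K, f k * q ^ k) + f K * q ^ K from Finset.sum_range_succ _ _,
      htop, zero_mul, add_zero, shift_sum]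
  have expand : 2 * (m : ℤ) * ∑ k ∈ Finset.range (K + 1), f k * q ^ k
      = (∑ k ∈ Finset.range (K + 1), f k * q ^ k)
        + q * ∑ k ∈ Finset.range (K + 1), f k * q ^ k := by rw [hq]; ring
  rw [show (2 : ℤ) * m * ∑ k ∈ Finset.range (K + 1), (n.choose k : ℤ) * ((n : ℤ) - 2 * k) * q ^ k
      = 2 * m * ∑ k ∈ Finset.range (K + 1), f k * q ^ k from rfl, expand, hshift,
    ← Finset.sum_add_distrib, bsum, Finset.mul_sum]
  refine Finset.sum_congr rfl fun k hk => ?_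
  rw [Finset.mem_range] at hk
  match k with
  | 0 => simp [bal, hf]
  | (j + 1) =>
    simp only [bal, if_neg (Nat.succ_ne_zero _), Nat.add_sub_cancel, hf]
    have hid : (n.choose (j + 1) : ℤ) * ((j : ℤ) + 1) = (n.choose j : ℤ) * ((n : ℤ) - j) := by
      have h := Nat.choose_succ_right_eq n j
      have hjn : j ≤ n := by omega
      have hcast : ((n.choose j * (n - j) : ℕ) : ℤ) = (n.choose j : ℤ) * ((n : ℤ) - j) := by
        push_cast [Nat.cast_sub hjn]; ring
      rw [← hcast]
      exact_mod_cast congrArg (Nat.cast : ℕ → ℤ) h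
    push_cast
    linear_combination 2 * q ^ (j + 1) * hid

variable {m : ℕ}

def mmk (x : Fin m × Bool) : FreeGroup (Fin m) := FreeGroup.mk [x]

lemma toWord_mmk (x : Fin m × Bool) : (mmk x).toWord = [x] := by
  rw [mmk, FreeGroup.toWord_mk, FreeGroup.reduce_singleton]

lemma mmk_injective : Function.Injective (mmk (m := m)) := by
  intro x y h
  have h2 := congrArg FreeGroup.toWord h
  rw [toWord_mmk, toWord_mmk] at h2
  simpa using h2

lemma mmk_inv (x : Fin m × Bool) : (mmk x)⁻¹ = mmk (x.1, !x.2) := by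
  rw [mmk, FreeGroup.inv_mk, mmk]
  congr 1

lemma mmk_true (a : Fin m) : mmk (a, true) = FreeGroup.of a := rfl

lemma mmk_false (a : Fin m) : mmk (a, false) = (FreeGroup.of a)⁻¹ := by
  rw [← mmk_true, mmk_inv]
  rfl

lemma toWord_mmk_mul (x : Fin m × Bool) (g : FreeGroup (Fin m)) (hd : Fin m × Bool)
    (tl : List (Fin m × Bool)) (h : g.toWord = hd :: tl) :
    (mmk x * g).toWord = if x.1 = hd.1 ∧ x.2 = !hd.2 then tl else x :: hd :: tl := by
  have hg : g = FreeGroup.mk (hd :: tl) := by rw [← h, FreeGroup.mk_toWord]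
  have hred : FreeGroup.reduce (hd :: tl) = hd :: tl := by
    rw [← h]; exact FreeGroup.reduce_toWord g
  rw [hg, mmk, FreeGroup.mul_mk, FreeGroup.toWord_mk,
    show ([x] ++ (hd :: tl)) = x :: hd :: tl from rfl,
    FreeGroup.reduce.cons, hred]

lemma length_mmk_mul (x : Fin m × Bool) (g : FreeGroup (Fin m)) (hd : Fin m × Bool)
    (tl : List (Fin m × Bool)) (h : g.toWord = hd :: tl) :
    (mmk x * g).toWord.length = if x = (hd.1, !hd.2) then tl.length else tl.length + 2 := by
  rw [toWord_mmk_mul x g hd tl h]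
  by_cases hx : x = (hd.1, !hd.2)
  · rw [if_pos hx, if_pos (by rw [hx]; exact ⟨rfl, rfl⟩)]
  · rw [if_neg hx, if_neg (fun hc => hx (Prod.ext hc.1 hc.2))]
    simp

noncomputable def cnt (m n : ℕ) (g : FreeGroup (Fin m)) : ℕ :=
  Nat.card {u : Fin n → Fin m × Bool // (List.ofFn fun i => mmk (u i)).prod = g}

lemma cnt_zero (g : FreeGroup (Fin m)) : cnt m 0 g = if g = 1 then 1 else 0 := by
  by_cases hg : g = 1
  · subst hg
    rw [if_pos rfl, cnt, Nat.card_eq_one_iff_unique]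
    constructor
    · exact ⟨fun a b => Subtype.ext (funext fun i => i.elim0)⟩
    · exact ⟨⟨fun i => i.elim0, by simp⟩⟩
  · rw [if_neg hg, cnt]
    have : IsEmpty {u : Fin 0 → Fin m × Bool // (List.ofFn fun i => mmk (u i)).prod = g} := by
      constructor; rintro ⟨u, hu⟩
      simp only [List.ofFn_zero, List.prod_nil] at hu
      exact hg hu.symm
    exact Nat.card_of_isEmpty

lemma cnt_succ (n : ℕ) (g : FreeGroup (Fin m)) :
    cnt m (n + 1) g = ∑ x : Fin m × Bool, cnt m n ((mmk x)⁻¹ * g) := by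
  have e : {u : Fin (n + 1) → Fin m × Bool // (List.ofFn fun i => mmk (u i)).prod = g}
      ≃ (x : Fin m × Bool) ×
        {u : Fin n → Fin m × Bool // (List.ofFn fun i => mmk (u i)).prod = (mmk x)⁻¹ * g} :=
    { toFun := fun u => ⟨u.1 0, ⟨fun i => u.1 i.succ, by
        have hu := u.2
        rw [List.ofFn_succ, List.prod_cons] at hu
        rw [eq_inv_mul_iff_mul_eq]
        exact hu⟩⟩
      invFun := fun s => ⟨Fin.cons s.1 s.2.1, by
        rw [List.ofFn_succ, List.prod_cons]
        simp only [Fin.cons_zero, Fin.cons_succ]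
        rw [s.2.2, mul_inv_cancel_left]⟩
      left_inv := by
        rintro ⟨u, hu⟩
        apply Subtype.ext
        funext i
        refine Fin.cases ?_ (fun j => ?_) i <;> simp
      right_inv := by
        rintro ⟨x, u, hu⟩
        refine Sigma.ext ?_ ?_
        · simp
        · apply heq_of_eq
          apply Subtype.ext
          funext i
          simp }
  rw [cnt, Nat.card_congr e, Nat.card_eq_fintype_card, Fintype.card_sigma]
  exact Finset.sum_congr rfl fun x _ => (Nat.card_eq_fintype_card).symm

lemma cnt_eq_B : ∀ (n : ℕ) (g : FreeGroup (Fin m)), (cnt m n g : ℤ) = B m n g.toWord.length := by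
  intro n
  induction n with
  | zero =>
    intro g
    rw [cnt_zero]
    by_cases hg : g = 1
    · subst hg
      rw [if_pos rfl, FreeGroup.toWord_one]
      rfl
    · rw [if_neg hg]
      obtain ⟨hd, tl, hw⟩ : ∃ hd tl, g.toWord = hd :: tl := by
        cases h : g.toWord with
        | nil => exact absurd (FreeGroup.toWord_eq_nil_iff.mp h) hg
        | cons a l => exact ⟨a, l, rfl⟩
      rw [hw]
      simp [B]
  | succ n ih =>
    intro g
    rw [cnt_succ]
    push_cast
    rw [Finset.sum_congr rfl (fun x _ => ih ((mmk x)⁻¹ * g))]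
    rcases hw : g.toWord with _ | ⟨hd, tl⟩
    · have hg : g = 1 := FreeGroup.toWord_eq_nil_iff.mp hw
      subst hg
      have hlen : ∀ x : Fin m × Bool, ((mmk x)⁻¹ * 1).toWord.length = 1 := by
        intro x
        rw [mul_one, mmk_inv, toWord_mmk]
        rfl
      rw [Finset.sum_congr rfl (fun x _ => by rw [hlen x])]
      rw [Finset.sum_const, Finset.card_univ]
      have hcard : Fintype.card (Fin m × Bool) = 2 * m := by simp [mul_comm]
      rw [hcard, show ([] : List (Fin m × Bool)).length = 0 from rfl,
        show B m (n + 1) 0 = 2 * m * B m n 1 from rfl, nsmul_eq_mul]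
      push_cast
      ring
    · have hlen : ∀ x : Fin m × Bool, ((mmk x)⁻¹ * g).toWord.length
          = if x = hd then tl.length else tl.length + 2 := by
        intro x
        rw [mmk_inv, length_mmk_mul (x.1, !x.2) g hd tl hw]
        by_cases hx : x = hd
        · rw [if_pos hx, if_pos (by rw [hx])]
        · have hcne : ¬((x.1, !x.2) = (hd.1, !hd.2)) := by
            intro hc
            rw [Prod.ext_iff] at hc
            exact hx (Prod.ext hc.1 (Bool.not_inj hc.2))
          rw [if_neg hx, if_neg hcne]
      rw [Finset.sum_congr rfl (fun x _ => by rw [hlen x])]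
      have split : ∀ x : Fin m × Bool,
          B m n (if x = hd then tl.length else tl.length + 2)
          = B m n (tl.length + 2)
            + (if x = hd then B m n tl.length - B m n (tl.length + 2) else 0) := by
        intro x
        by_cases hx : x = hd <;> simp [hx]
      rw [Finset.sum_congr rfl (fun x _ => split x)]
      rw [Finset.sum_add_distrib, Finset.sum_const, Finset.card_univ, Finset.sum_ite_eq'
        Finset.univ hd (fun _ => B m n tl.length - B m n (tl.length + 2)),
        if_pos (Finset.mem_univ hd)]
      have hcard : Fintype.card (Fin m × Bool) = 2 * m := by simp [mul_comm]
      rw [hcard, show (hd :: tl).length = tl.length + 1 from rfl,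
        show B m (n + 1) (tl.length + 1)
          = B m n tl.length + (2 * (m : ℤ) - 1) * B m n (tl.length + 2) from rfl]
      push_cast
      ring


lemma card_eq (m n : ℕ) :
    Nat.card {t : Fin n → FreeGroup (Fin m) //
        (∀ i, t i ∈ Set.range (FreeGroup.of : Fin m → FreeGroup (Fin m)) ∪
          Set.range fun i : Fin m => (FreeGroup.of i)⁻¹) ∧
        (List.ofFn t).prod = 1} = cnt m n 1 := by
  symm
  apply Nat.card_congr
  refine Equiv.ofBijective (fun u => ⟨fun i => mmk (u.1 i), ?_, ?_⟩) ⟨?_, ?_⟩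
  · intro i
    show mmk (u.1 i) ∈ _
    rcases hx : u.1 i with ⟨a, b⟩
    cases b
    · right
      rw [mmk_false]
      exact ⟨a, rfl⟩
    · left
      rw [mmk_true]
      exact ⟨a, rfl⟩
  · exact u.2
  · rintro ⟨u, hu⟩ ⟨v, hv⟩ h
    have h2 := congrArg Subtype.val h
    apply Subtype.ext
    funext i
    exact mmk_injective (congrFun h2 i)
  · rintro ⟨t, hmem, hprod⟩
    have hex : ∀ i, ∃ x : Fin m × Bool, mmk x = t i := by
      intro i
      rcases hmem i with ⟨a, ha⟩ | ⟨a, ha⟩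
      · exact ⟨(a, true), by rw [mmk_true]; exact ha⟩
      · exact ⟨(a, false), by rw [mmk_false]; exact ha⟩
    choose u hu using hex
    have ht : (fun i => mmk (u i)) = t := funext hu
    refine ⟨⟨u, ?_⟩, ?_⟩
    · rw [show (List.ofFn fun i => mmk (u i)) = List.ofFn t from by rw [ht]]
      exact hprod
    · exact Subtype.ext ht

end McKay14

/-- (McKay) Let `F_m` be the free group on `m ≥ 1` generators, `S` the symmetric set
of the generators and their inverses, `v = 2m`, and `N_e(n)` the number of `n`-tuples
from `S` with product `1`.  Then `N_e(n) = 0` for odd `n`, and for even `n ≥ 2`,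
`n · N_e(n) = v · Σ_{k=0}^{n/2} C(n,k) (n−2k) (v−1)^k`. -/
theorem stmt_14 (m : ℕ) (hm : 1 ≤ m) (n : ℕ) :
    (Odd n →
      Nat.card {t : Fin n → FreeGroup (Fin m) //
        (∀ i, t i ∈ Set.range (FreeGroup.of : Fin m → FreeGroup (Fin m)) ∪
          Set.range fun i : Fin m => (FreeGroup.of i)⁻¹) ∧
        (List.ofFn t).prod = 1} = 0) ∧
    (Even n → 2 ≤ n →
      n * Nat.card {t : Fin n → FreeGroup (Fin m) //
        (∀ i, t i ∈ Set.range (FreeGroup.of : Fin m → FreeGroup (Fin m)) ∪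
          Set.range fun i : Fin m => (FreeGroup.of i)⁻¹) ∧
        (List.ofFn t).prod = 1}
      = 2 * m * ∑ k ∈ Finset.range (n / 2 + 1),
          n.choose k * (n - 2 * k) * (2 * m - 1) ^ k) := by
  have hB : (McKay14.cnt m n 1 : ℤ) = McKay14.B m n 0 := by
    have := McKay14.cnt_eq_B (m := m) n 1
    rwa [FreeGroup.toWord_one, List.length_nil] at this
  constructor
  · intro hodd
    rw [McKay14.card_eq m n]
    have h1 : n % 2 = 1 := Nat.odd_iff.mp hodd
    have hz : (McKay14.cnt m n 1 : ℤ) = 0 := by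
      rw [hB, McKay14.B_eq, if_neg (by omega)]
    exact_mod_cast hz
  · intro heven h2
    have h0 : n % 2 = 0 := Nat.even_iff.mp heven
    have key : ((n * Nat.card {t : Fin n → FreeGroup (Fin m) //
        (∀ i, t i ∈ Set.range (FreeGroup.of : Fin m → FreeGroup (Fin m)) ∪
          Set.range fun i : Fin m => (FreeGroup.of i)⁻¹) ∧
        (List.ofFn t).prod = 1} : ℕ) : ℤ)
        = ((2 * m * ∑ k ∈ Finset.range (n / 2 + 1),
          n.choose k * (n - 2 * k) * (2 * m - 1) ^ k : ℕ) : ℤ) := by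
      rw [McKay14.card_eq m n]
      push_cast
      rw [hB, McKay14.B_zero_even m n h0]
      congr 1
      refine Finset.sum_congr rfl fun k hk => ?_
      rw [Finset.mem_range] at hk
      have h2k : 2 * k ≤ n := by omega
      have h1m : 1 ≤ 2 * m := by omega
      rw [Nat.cast_sub h2k, Nat.cast_sub h1m]
      push_cast
      ring
    exact Nat.cast_inj.mp key
end

section
/- (McKay) Let m ≥ 1, let F_m be the free group on m generators with symmetric generating set S of cardinality v = 2m, and let s ∈ S be one of the generators or inverse generators. Let N_s(n) be the number of n-tuples from S with product s^{−1} and N_e(n) the number of n-tuples from S with product 1. Then N_s(n) = 0 for n even, and v · N_s(n) = N_e(n + 1) for n odd. -/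
open FreeGroup

namespace Stmt15

variable {m : ℕ}

abbrev S (m : ℕ) : Set (FreeGroup (Fin m)) :=
  Set.range (FreeGroup.of : Fin m → FreeGroup (Fin m)) ∪
    Set.range fun i : Fin m => (FreeGroup.of i)⁻¹

/-- parity homomorphism -/
def eps (m : ℕ) : FreeGroup (Fin m) →* Multiplicative (ZMod 2) :=
  FreeGroup.lift fun _ => Multiplicative.ofAdd 1

lemma eps_mem {x : FreeGroup (Fin m)} (hx : x ∈ S m) :
    eps m x = Multiplicative.ofAdd 1 := by
  rcases hx with ⟨j, rfl⟩ | ⟨j, rfl⟩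
  · simp [eps, lift_apply_of]
  · show eps m (FreeGroup.of j)⁻¹ = _
    rw [_root_.map_inv]
    simp only [eps, lift_apply_of]
    decide

lemma eps_prod {n : ℕ} (t : Fin n → FreeGroup (Fin m)) (h : ∀ i, t i ∈ S m) :
    eps m (List.ofFn t).prod = Multiplicative.ofAdd (n : ZMod 2) := by
  rw [map_list_prod]
  rw [List.prod_eq_pow_card _ (Multiplicative.ofAdd (1 : ZMod 2)) ?_]
  · rw [List.length_map, List.length_ofFn, ← ofAdd_nsmul]
    congr 1
    simp [nsmul_eq_mul]
  · intro x hx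
    rw [List.mem_map] at hx
    obtain ⟨a, ha, rfl⟩ := hx
    rw [List.mem_ofFn] at ha
    obtain ⟨i, rfl⟩ := ha
    exact eps_mem (h i)

lemma of_ne_inv (i j : Fin m) :
    (FreeGroup.of i : FreeGroup (Fin m)) ≠ (FreeGroup.of j)⁻¹ := by
  intro h
  have h1 := congrArg (FreeGroup.lift fun _ : Fin m => Multiplicative.ofAdd (1 : ℤ)) h
  rw [_root_.map_inv, lift_apply_of, lift_apply_of] at h1
  have h2 := congrArg Multiplicative.toAdd h1
  simp at h2

def invHom (i0 : Fin m) : FreeGroup (Fin m) →* FreeGroup (Fin m) :=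
  FreeGroup.lift fun j => if j = i0 then (FreeGroup.of j)⁻¹ else FreeGroup.of j

lemma invHom_comp (i0 : Fin m) :
    (invHom i0).comp (invHom i0) = MonoidHom.id (FreeGroup (Fin m)) := by
  apply FreeGroup.ext_hom
  intro j
  by_cases h : j = i0 <;> simp [invHom, lift_apply_of, h]

def invAut (i0 : Fin m) : FreeGroup (Fin m) ≃* FreeGroup (Fin m) :=
  MonoidHom.toMulEquiv (invHom i0) (invHom i0) (invHom_comp i0) (invHom_comp i0)

lemma invAut_apply (i0 : Fin m) (x : FreeGroup (Fin m)) : invAut i0 x = invHom i0 x := rfl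

lemma invAut_symm_apply (i0 : Fin m) (x : FreeGroup (Fin m)) :
    (invAut i0).symm x = invHom i0 x := rfl

lemma invHom_mem {i0 : Fin m} {x : FreeGroup (Fin m)} (hx : x ∈ S m) : invHom i0 x ∈ S m := by
  rcases hx with ⟨j, rfl⟩ | ⟨j, rfl⟩
  · rw [show invHom i0 (FreeGroup.of j) = _ from lift_apply_of]
    split_ifs with h
    · exact Or.inr ⟨j, rfl⟩
    · exact Or.inl ⟨j, rfl⟩
  · show invHom i0 (FreeGroup.of j)⁻¹ ∈ S m
    rw [_root_.map_inv, show invHom i0 (FreeGroup.of j) = _ from lift_apply_of]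
    split_ifs with h
    · rw [inv_inv]; exact Or.inl ⟨j, rfl⟩
    · exact Or.inr ⟨j, rfl⟩

lemma congr_mem (e : Fin m ≃ Fin m) {x : FreeGroup (Fin m)} (hx : x ∈ S m) :
    freeGroupCongr e x ∈ S m := by
  rcases hx with ⟨j, rfl⟩ | ⟨j, rfl⟩
  · rw [freeGroupCongr_apply, map.of]
    exact Or.inl ⟨e j, rfl⟩
  · show freeGroupCongr e (FreeGroup.of j)⁻¹ ∈ S m
    rw [_root_.map_inv, freeGroupCongr_apply, map.of]
    exact Or.inr ⟨e j, rfl⟩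

lemma card_eq_of_aut (m n : ℕ) (φ : FreeGroup (Fin m) ≃* FreeGroup (Fin m))
    (hφ : ∀ x ∈ S m, φ x ∈ S m) (hφ' : ∀ x ∈ S m, φ.symm x ∈ S m)
    (g : FreeGroup (Fin m)) :
    Nat.card {t : Fin n → FreeGroup (Fin m) //
        (∀ i, t i ∈ S m) ∧ (List.ofFn t).prod = g}
      = Nat.card {t : Fin n → FreeGroup (Fin m) //
        (∀ i, t i ∈ S m) ∧ (List.ofFn t).prod = φ g} := by
  apply Nat.card_congr
  refine ⟨fun t => ⟨fun i => φ (t.1 i), fun i => hφ _ (t.2.1 i), ?_⟩,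
      fun t => ⟨fun i => φ.symm (t.1 i), fun i => hφ' _ (t.2.1 i), ?_⟩, ?_, ?_⟩
  · show (List.ofFn (φ ∘ t.1)).prod = φ g
    rw [← List.map_ofFn, ← map_list_prod φ, t.2.2]
  · show (List.ofFn (φ.symm ∘ t.1)).prod = g
    rw [← List.map_ofFn, ← map_list_prod φ.symm, t.2.2, MulEquiv.symm_apply_apply]
  · intro t; apply Subtype.ext; funext i; simp
  · intro t; apply Subtype.ext; funext i; simp


lemma finite_S : Finite (S m) :=
  ((Set.finite_range _).union (Set.finite_range _)).to_subtype

lemma finite_fiber (n : ℕ) (g : FreeGroup (Fin m)) :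
    Finite {t : Fin n → FreeGroup (Fin m) //
      (∀ i, t i ∈ S m) ∧ (List.ofFn t).prod = g} := by
  haveI := finite_S (m := m)
  apply Finite.of_injective
    (fun t : {t : Fin n → FreeGroup (Fin m) //
      (∀ i, t i ∈ S m) ∧ (List.ofFn t).prod = g} =>
      (fun i => (⟨t.1 i, t.2.1 i⟩ : S m) : Fin n → S m))
  intro t u h
  apply Subtype.ext
  funext i
  exact congrArg Subtype.val (congrFun h i)

lemma card_S (m : ℕ) : Nat.card (S m) = 2 * m := by
  have h1 : Nat.card (Set.range (FreeGroup.of : Fin m → FreeGroup (Fin m))) = m := by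
    rw [Nat.card_range_of_injective FreeGroup.of_injective, Nat.card_eq_fintype_card,
      Fintype.card_fin]
  have hinj : Function.Injective (fun i : Fin m => (FreeGroup.of i)⁻¹) := by
    intro i j h
    exact FreeGroup.of_injective (inv_injective h)
  have h2 : Nat.card (Set.range fun i : Fin m => ((FreeGroup.of i)⁻¹ : FreeGroup (Fin m))) = m := by
    rw [Nat.card_range_of_injective hinj, Nat.card_eq_fintype_card, Fintype.card_fin]
  have hd : Disjoint (Set.range (FreeGroup.of : Fin m → FreeGroup (Fin m)))
      (Set.range fun i : Fin m => ((FreeGroup.of i)⁻¹ : FreeGroup (Fin m))) := by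
    rw [Set.disjoint_left]
    rintro x ⟨i, rfl⟩ ⟨j, hj⟩
    exact of_ne_inv i j hj.symm
  rw [Nat.card_coe_set_eq, Set.ncard_union_eq hd (Set.finite_range _) (Set.finite_range _),
    ← Nat.card_coe_set_eq, ← Nat.card_coe_set_eq, h1, h2]
  omega

lemma card_fiber {m : ℕ} (n : ℕ) (hm : 1 ≤ m) {s : FreeGroup (Fin m)} (hs : s ∈ S m) :
    Nat.card {t : Fin n → FreeGroup (Fin m) //
        (∀ i, t i ∈ S m) ∧ (List.ofFn t).prod = s⁻¹}
      = Nat.card {t : Fin n → FreeGroup (Fin m) //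
        (∀ i, t i ∈ S m) ∧ (List.ofFn t).prod = (FreeGroup.of (⟨0, hm⟩ : Fin m))⁻¹} := by
  set i0 : Fin m := ⟨0, hm⟩
  obtain ⟨φ, hφ, hφ', hφ0⟩ : ∃ φ : FreeGroup (Fin m) ≃* FreeGroup (Fin m),
      (∀ x ∈ S m, φ x ∈ S m) ∧ (∀ x ∈ S m, φ.symm x ∈ S m) ∧ φ (FreeGroup.of i0) = s := by
    rcases hs with ⟨i, rfl⟩ | ⟨i, rfl⟩
    · refine ⟨freeGroupCongr (Equiv.swap i0 i), fun x hx => congr_mem _ hx, ?_, ?_⟩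
      · intro x hx
        rw [freeGroupCongr_symm]
        exact congr_mem _ hx
      · rw [freeGroupCongr_apply, map.of, Equiv.swap_apply_left]
    · refine ⟨(invAut i0).trans (freeGroupCongr (Equiv.swap i0 i)), ?_, ?_, ?_⟩
      · intro x hx
        rw [MulEquiv.trans_apply]
        exact congr_mem _ (invHom_mem hx)
      · intro x hx
        rw [MulEquiv.symm_trans_apply, invAut_symm_apply, freeGroupCongr_symm]
        exact invHom_mem (congr_mem _ hx)
      · rw [MulEquiv.trans_apply, invAut_apply, invHom,
          show FreeGroup.lift (fun j => if j = i0 then (FreeGroup.of j)⁻¹ else FreeGroup.of j)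
            (FreeGroup.of i0) = _ from lift_apply_of, if_pos rfl]
        show freeGroupCongr (Equiv.swap i0 i) (FreeGroup.of i0)⁻¹ = _
        rw [_root_.map_inv, freeGroupCongr_apply, map.of, Equiv.swap_apply_left]
  have := card_eq_of_aut m n φ hφ hφ' ((FreeGroup.of i0)⁻¹)
  rw [_root_.map_inv, hφ0] at this
  exact this.symm

end Stmt15

/-- (McKay) Let `F_m` be the free group on `m ≥ 1` generators with symmetric
generating set `S` (the generators and their inverses, `|S| = v = 2m`), and let
`s ∈ S`.  With `N_s(n)` the number of `n`-tuples from `S` with product `s⁻¹` and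
`N_e(n)` the number of `n`-tuples from `S` with product `1`, one has `N_s(n) = 0`
for even `n` and `v · N_s(n) = N_e(n+1)` for odd `n`. -/
theorem stmt_15 (m : ℕ) (hm : 1 ≤ m) (s : FreeGroup (Fin m))
    (hs : s ∈ Set.range (FreeGroup.of : Fin m → FreeGroup (Fin m)) ∪
      Set.range fun i : Fin m => (FreeGroup.of i)⁻¹) (n : ℕ) :
    (Even n →
      Nat.card {t : Fin n → FreeGroup (Fin m) //
        (∀ i, t i ∈ Set.range (FreeGroup.of : Fin m → FreeGroup (Fin m)) ∪
          Set.range fun i : Fin m => (FreeGroup.of i)⁻¹) ∧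
        (List.ofFn t).prod = s⁻¹} = 0) ∧
    (Odd n →
      2 * m * Nat.card {t : Fin n → FreeGroup (Fin m) //
        (∀ i, t i ∈ Set.range (FreeGroup.of : Fin m → FreeGroup (Fin m)) ∪
          Set.range fun i : Fin m => (FreeGroup.of i)⁻¹) ∧
        (List.ofFn t).prod = s⁻¹}
      = Nat.card {t : Fin (n + 1) → FreeGroup (Fin m) //
        (∀ i, t i ∈ Set.range (FreeGroup.of : Fin m → FreeGroup (Fin m)) ∪
          Set.range fun i : Fin m => (FreeGroup.of i)⁻¹) ∧
        (List.ofFn t).prod = 1}) := by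
  constructor
  · intro hn
    show Nat.card {t : Fin n → FreeGroup (Fin m) //
        (∀ i, t i ∈ Stmt15.S m) ∧ (List.ofFn t).prod = s⁻¹} = 0
    haveI : IsEmpty {t : Fin n → FreeGroup (Fin m) //
        (∀ i, t i ∈ Stmt15.S m) ∧ (List.ofFn t).prod = s⁻¹} := by
      constructor
      rintro ⟨t, ht, hp⟩
      have h1 := Stmt15.eps_prod t ht
      rw [hp, _root_.map_inv, Stmt15.eps_mem hs] at h1
      have hcast : ((n : ZMod 2)) = 0 := by
        obtain ⟨k, rfl⟩ := hn
        push_cast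
        rw [← two_mul]
        simp [show (2 : ZMod 2) = 0 by decide]
      rw [hcast] at h1
      exact absurd h1 (by decide)
    exact Nat.card_of_isEmpty
  · intro hn
    show 2 * m * Nat.card {t : Fin n → FreeGroup (Fin m) //
          (∀ i, t i ∈ Stmt15.S m) ∧ (List.ofFn t).prod = s⁻¹}
        = Nat.card {t : Fin (n + 1) → FreeGroup (Fin m) //
          (∀ i, t i ∈ Stmt15.S m) ∧ (List.ofFn t).prod = 1}
    haveI : Finite ↥(Stmt15.S m) := Stmt15.finite_S
    haveI hfin : ∀ g : FreeGroup (Fin m), Finite {t : Fin n → FreeGroup (Fin m) //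
        (∀ i, t i ∈ Stmt15.S m) ∧ (List.ofFn t).prod = g} := Stmt15.finite_fiber n
    letI : Fintype ↥(Stmt15.S m) := Fintype.ofFinite _
    letI : ∀ s' : ↥(Stmt15.S m), Fintype {t : Fin n → FreeGroup (Fin m) //
        (∀ i, t i ∈ Stmt15.S m) ∧ (List.ofFn t).prod = (s' : FreeGroup (Fin m))⁻¹} :=
      fun _ => Fintype.ofFinite _
    have E : {t : Fin (n + 1) → FreeGroup (Fin m) //
          (∀ i, t i ∈ Stmt15.S m) ∧ (List.ofFn t).prod = 1}
        ≃ Σ s' : ↥(Stmt15.S m), {t : Fin n → FreeGroup (Fin m) //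
          (∀ i, t i ∈ Stmt15.S m) ∧ (List.ofFn t).prod = (s' : FreeGroup (Fin m))⁻¹} := by
      refine ⟨fun t => ⟨⟨t.1 0, t.2.1 0⟩, fun i => t.1 i.succ, fun i => t.2.1 _, ?_⟩,
          fun p => ⟨Fin.cons p.1.1 p.2.1, ?_, ?_⟩, ?_, ?_⟩
      · have h := t.2.2
        rw [List.ofFn_succ, List.prod_cons] at h
        exact (mul_eq_one_iff_inv_eq.mp h).symm
      · intro i
        induction i using Fin.cases with
        | zero => simp only [Fin.cons_zero]; exact p.1.2
        | succ j => simpa using p.2.2.1 j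
      · rw [List.ofFn_succ, List.prod_cons]
        simp [Fin.cons_zero, Fin.cons_succ, p.2.2.2]
      · intro t
        apply Subtype.ext
        exact Fin.cons_self_tail t.1
      · rintro ⟨⟨a, ha⟩, b, hb⟩
        rfl
    calc 2 * m * Nat.card {t : Fin n → FreeGroup (Fin m) //
            (∀ i, t i ∈ Stmt15.S m) ∧ (List.ofFn t).prod = s⁻¹}
        = Fintype.card ↥(Stmt15.S m) * Nat.card {t : Fin n → FreeGroup (Fin m) //
            (∀ i, t i ∈ Stmt15.S m) ∧ (List.ofFn t).prod = s⁻¹} := by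
          rw [← Nat.card_eq_fintype_card, Stmt15.card_S]
      _ = ∑ _s' : ↥(Stmt15.S m), Nat.card {t : Fin n → FreeGroup (Fin m) //
            (∀ i, t i ∈ Stmt15.S m) ∧ (List.ofFn t).prod = s⁻¹} := by
          rw [Finset.sum_const, Finset.card_univ, smul_eq_mul]
      _ = ∑ s' : ↥(Stmt15.S m), Nat.card {t : Fin n → FreeGroup (Fin m) //
            (∀ i, t i ∈ Stmt15.S m) ∧ (List.ofFn t).prod = (s' : FreeGroup (Fin m))⁻¹} := by
          refine Finset.sum_congr rfl fun s' _ => ?_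
          rw [Stmt15.card_fiber n hm hs, ← Stmt15.card_fiber n hm s'.2]
      _ = Nat.card (Σ s' : ↥(Stmt15.S m), {t : Fin n → FreeGroup (Fin m) //
            (∀ i, t i ∈ Stmt15.S m) ∧ (List.ofFn t).prod = (s' : FreeGroup (Fin m))⁻¹}) := by
          rw [Nat.card_eq_fintype_card, Fintype.card_sigma]
          exact Finset.sum_congr rfl fun s' _ => Nat.card_eq_fintype_card
      _ = Nat.card {t : Fin (n + 1) → FreeGroup (Fin m) //
            (∀ i, t i ∈ Stmt15.S m) ∧ (List.ofFn t).prod = 1} := (Nat.card_congr E).symm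
end

section
/- Let G be a group containing an element of infinite order, and let T be a bounded linear operator on ℓ²(G) that commutes with the right regular representation, i.e. T ∘ R_h = R_h ∘ T for every h ∈ G, where (R_h f)(g) = f(g h). Then for every μ ∈ ℂ, the eigenspace ker(T − μ·Id) is either the zero subspace or infinite-dimensional. In particular, T has no discrete spectrum (no eigenvalue of finite multiplicity). -/
/-- Auxiliary: if `u ∈ ℓ²(G)`, `v` has infinite order, `‖ν‖ ≥ 1` and
`u (g * v) = ν * u g` for all `g`, then `u = 0` pointwise. -/
lemma aux_vanish {G : Type*} [Group G] (u : lp (fun _ : G => ℂ) 2)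
    (v : G) (hv : ∀ k : ℤ, k ≠ 0 → v ^ k ≠ 1) (ν : ℂ) (hν : 1 ≤ ‖ν‖)
    (hkey : ∀ g : G, (u : ∀ _ : G, ℂ) (g * v) = ν * (u : ∀ _ : G, ℂ) g) :
    ∀ g : G, (u : ∀ _ : G, ℂ) g = 0 := by
  intro g₀
  by_contra hg₀
  -- the powers map is injective
  have hinj : Function.Injective (fun n : ℕ => g₀ * v ^ n) := by
    intro m n hmn
    simp only [mul_right_inj] at hmn
    by_contra hne
    have h1 : v ^ ((m : ℤ) - (n : ℤ)) = 1 := by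
      rw [zpow_sub, zpow_natCast, zpow_natCast, hmn, mul_inv_cancel]
    exact hv _ (sub_ne_zero.mpr (by exact_mod_cast hne)) h1
  -- geometric growth along the orbit
  have horb : ∀ n : ℕ, (u : ∀ _ : G, ℂ) (g₀ * v ^ n) = ν ^ n * (u : ∀ _ : G, ℂ) g₀ := by
    intro n
    induction n with
    | zero => simp
    | succ n ih =>
      have : g₀ * v ^ (n + 1) = (g₀ * v ^ n) * v := by
        rw [pow_succ, mul_assoc]
      rw [this, hkey, ih, pow_succ]
      ring
  -- summability of squares
  have hsum : Summable fun g : G => ‖(u : ∀ _ : G, ℂ) g‖ ^ (2 : ENNReal).toReal :=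
    (lp.memℓp u).summable (by norm_num)
  have hsum2 : Summable fun n : ℕ => ‖(u : ∀ _ : G, ℂ) (g₀ * v ^ n)‖ ^ (2 : ENNReal).toReal :=
    hsum.comp_injective hinj
  -- each term is at least the positive constant `‖u g₀‖ ^ 2`
  set c : ℝ := ‖(u : ∀ _ : G, ℂ) g₀‖ ^ (2 : ENNReal).toReal with hc
  have hcpos : 0 < c := by
    apply Real.rpow_pos_of_pos
    simpa using hg₀
  have hle : ∀ n : ℕ, c ≤ ‖(u : ∀ _ : G, ℂ) (g₀ * v ^ n)‖ ^ (2 : ENNReal).toReal := by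
    intro n
    rw [horb n, norm_mul, norm_pow]
    apply Real.rpow_le_rpow (norm_nonneg _)
    · nlinarith [norm_nonneg ((u : ∀ _ : G, ℂ) g₀), one_le_pow₀ hν (n := n)]
    · norm_num
  have htend := hsum2.tendsto_atTop_zero
  have : c ≤ 0 := ge_of_tendsto htend (Filter.Eventually.of_forall hle)
  linarith

/-- Let `G` be a group containing an element of infinite order and let `T` be a
bounded operator on `ℓ²(G)` commuting with the right regular representation
`(R_h f)(g) = f(g h)`.  Then for every `μ ∈ ℂ` the eigenspace `ker(T − μ·Id)` is
either zero or infinite-dimensional; in particular `T` has no eigenvalue of finite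
multiplicity (no discrete spectrum). -/
theorem stmt_18 {G : Type*} [Group G]
    (hG : ∃ w : G, ∀ k : ℤ, k ≠ 0 → w ^ k ≠ 1)
    (T : lp (fun _ : G => ℂ) 2 →L[ℂ] lp (fun _ : G => ℂ) 2)
    (hT : ∃ R : G → (lp (fun _ : G => ℂ) 2 →L[ℂ] lp (fun _ : G => ℂ) 2),
      (∀ (h : G) (f : lp (fun _ : G => ℂ) 2) (g : G),
        (R h f : ∀ _ : G, ℂ) g = (f : ∀ _ : G, ℂ) (g * h)) ∧
      ∀ h : G, T.comp (R h) = (R h).comp T) :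
    ∀ μ : ℂ,
      LinearMap.ker ((T - μ • (1 : lp (fun _ : G => ℂ) 2 →L[ℂ] lp (fun _ : G => ℂ) 2) :
        lp (fun _ : G => ℂ) 2 →ₗ[ℂ] lp (fun _ : G => ℂ) 2)) = ⊥ ∨
      ¬ FiniteDimensional ℂ
        (LinearMap.ker ((T - μ • (1 : lp (fun _ : G => ℂ) 2 →L[ℂ] lp (fun _ : G => ℂ) 2) :
          lp (fun _ : G => ℂ) 2 →ₗ[ℂ] lp (fun _ : G => ℂ) 2))) := by
  obtain ⟨w, hw⟩ := hG
  obtain ⟨R, hR, hC⟩ := hT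
  intro μ
  by_contra hcon
  push_neg at hcon
  obtain ⟨hne, hfin⟩ := hcon
  set E := LinearMap.ker ((T - μ • (1 : lp (fun _ : G => ℂ) 2 →L[ℂ] lp (fun _ : G => ℂ) 2) :
    lp (fun _ : G => ℂ) 2 →ₗ[ℂ] lp (fun _ : G => ℂ) 2)) with hE
  -- E is invariant under each R h
  have hinv : ∀ h : G, ∀ x ∈ E, R h x ∈ E := by
    intro h x hx
    rw [LinearMap.mem_ker] at hx ⊢
    have hx' : T x - μ • x = 0 := by simpa using hx
    have hcomm : T (R h x) = R h (T x) := DFunLike.congr_fun (hC h) x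
    have : T (R h x) - μ • (R h x) = R h (T x - μ • x) := by
      rw [hcomm, map_sub, map_smul]
    change T (R h x) - μ • R h x = 0
    rw [this, hx', map_zero]
  haveI : Nontrivial E := Submodule.nontrivial_iff_ne_bot.mpr hne
  -- the restriction of R w to E has an eigenvector
  let φ : E →ₗ[ℂ] E := ((R w).toLinearMap).restrict (hinv w)
  obtain ⟨lam, hlam⟩ := Module.End.exists_eigenvalue φ
  obtain ⟨⟨u, huE⟩, huv⟩ := hlam.exists_hasEigenvector
  have hu0 : u ≠ 0 := by
    intro h
    exact huv.right (by simp [h])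
  have hueq : R w u = lam • u := by
    have := huv.apply_eq_smul
    exact congrArg Subtype.val this
  -- pointwise: u (g * w) = lam * u g
  have hpt : ∀ g : G, (u : ∀ _ : G, ℂ) (g * w) = lam * (u : ∀ _ : G, ℂ) g := by
    intro g
    have h1 := hR w u g
    rw [hueq] at h1
    rw [← h1, lp.coeFn_smul, Pi.smul_apply, smul_eq_mul]
  -- u is not identically zero
  have hex : ∃ g : G, (u : ∀ _ : G, ℂ) g ≠ 0 := by
    by_contra hall
    push_neg at hall
    exact hu0 (by ext g; simpa using hall g)
  obtain ⟨g₁, hg₁⟩ := hex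
  -- case lam = 0
  rcases eq_or_ne lam 0 with hl0 | hl0
  · have : (u : ∀ _ : G, ℂ) g₁ = 0 := by
      have := hpt (g₁ * w⁻¹)
      rw [hl0, zero_mul] at this
      simpa using this
    exact hg₁ this
  -- lam ≠ 0: use w or w⁻¹ depending on |lam|
  rcases le_or_gt 1 ‖lam‖ with hge | hlt
  · exact hg₁ (aux_vanish u w hw lam hge hpt g₁)
  · have hw' : ∀ k : ℤ, k ≠ 0 → w⁻¹ ^ k ≠ 1 := by
      intro k hk h1
      rw [inv_zpow, inv_eq_one] at h1
      exact hw k hk h1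
    have hν : 1 ≤ ‖lam⁻¹‖ := by
      rw [norm_inv]
      rw [one_le_inv_iff₀]
      exact ⟨norm_pos_iff.mpr hl0, hlt.le⟩
    have hpt' : ∀ g : G, (u : ∀ _ : G, ℂ) (g * w⁻¹) = lam⁻¹ * (u : ∀ _ : G, ℂ) g := by
      intro g
      have := hpt (g * w⁻¹)
      rw [mul_assoc, inv_mul_cancel, mul_one] at this
      rw [this, ← mul_assoc, inv_mul_cancel₀ hl0, one_mul]
    exact hg₁ (aux_vanish u w⁻¹ hw' lam⁻¹ hν hpt' g₁)
end

section
/- Let G be a group containing an element of infinite order, and let T be a nonzero bounded linear operator on ℓ²(G) that commutes with the right regular representation, i.e. T ∘ R_h = R_h ∘ T for every h ∈ G. Then T is not a compact operator. Consequently, the image of the reduced group C*-algebra in the bounded operators on ℓ²(G) under the left regular representation contains no nonzero compact operator. -/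
open ENNReal

set_option synthInstance.maxHeartbeats 1000000
set_option maxHeartbeats 1000000

/-- Let `G` be a group containing an element of infinite order and let `T` be a
nonzero bounded operator on `ℓ²(G)` commuting with the right regular representation
`(R_h f)(g) = f(g h)`.  Then `T` is not a compact operator; consequently, the image
of the reduced group C*-algebra under the left regular representation contains no
nonzero compact operator. -/
theorem stmt_19 {G : Type*} [Group G]
    (hG : ∃ w : G, ∀ k : ℤ, k ≠ 0 → w ^ k ≠ 1)
    (T : lp (fun _ : G => ℂ) 2 →L[ℂ] lp (fun _ : G => ℂ) 2)
    (hT0 : T ≠ 0)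
    (hT : ∃ R : G → (lp (fun _ : G => ℂ) 2 →L[ℂ] lp (fun _ : G => ℂ) 2),
      (∀ (h : G) (f : lp (fun _ : G => ℂ) 2) (g : G),
        (R h f : ∀ _ : G, ℂ) g = (f : ∀ _ : G, ℂ) (g * h)) ∧
      ∀ h : G, T.comp (R h) = (R h).comp T) :
    ¬ IsCompactOperator (⇑T) := by
  obtain ⟨w, hw⟩ := hG
  obtain ⟨R, hR, hcomm⟩ := hT
  intro hcpt
  obtain ⟨K, hKc, hKmem⟩ := hcpt
  -- a vector not killed by T
  have hx : ∃ x, T x ≠ 0 := by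
    by_contra h
    push_neg at h
    exact hT0 (ContinuousLinearMap.ext fun x => by simpa using h x)
  obtain ⟨x, hx⟩ := hx
  set y : lp (fun _ : G => ℂ) 2 := T x with hy
  -- a nonzero coordinate of y
  have hg0 : ∃ g0 : G, (y : ∀ _ : G, ℂ) g0 ≠ 0 := by
    by_contra h
    push_neg at h
    exact hx (by
      apply lp.ext
      funext g
      simpa using h g)
  obtain ⟨g0, hg0⟩ := hg0
  set c0 : ℝ := ‖(y : ∀ _ : G, ℂ) g0‖ with hc0
  have hc0pos : 0 < c0 := norm_pos_iff.2 hg0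
  have h2 : (0:ℝ) < (2 : ℝ≥0∞).toReal := by norm_num
  -- R h is an isometry
  have hiso : ∀ (h : G) (f : lp (fun _ : G => ℂ) 2), ‖R h f‖ = ‖f‖ := by
    intro h f
    rw [lp.norm_eq_tsum_rpow h2, lp.norm_eq_tsum_rpow h2]
    congr 1
    calc ∑' g, ‖(R h f : ∀ _ : G, ℂ) g‖ ^ (2 : ℝ≥0∞).toReal
        = ∑' g, ‖(f : ∀ _ : G, ℂ) (g * h)‖ ^ (2 : ℝ≥0∞).toReal := by
          congr 1; funext g; rw [hR]
      _ = ∑' g, ‖(f : ∀ _ : G, ℂ) g‖ ^ (2 : ℝ≥0∞).toReal :=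
          (Equiv.mulRight h).tsum_eq (fun g => ‖(f : ∀ _ : G, ℂ) g‖ ^ (2 : ℝ≥0∞).toReal)
  -- the set of large coordinates of y is finite
  have hSfin : {g : G | c0 / 2 < ‖(y : ∀ _ : G, ℂ) g‖}.Finite := by
    have hsum : Summable fun g : G => ‖(y : ∀ _ : G, ℂ) g‖ ^ (2 : ℝ≥0∞).toReal :=
      (lp.memℓp y).summable h2
    have := hsum.tendsto_cofinite_zero
    have hev : ∀ᶠ g in Filter.cofinite,
        ‖(y : ∀ _ : G, ℂ) g‖ ^ (2 : ℝ≥0∞).toReal < (c0 / 2) ^ (2 : ℝ≥0∞).toReal := by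
      refine this.eventually (Filter.Tendsto.eventually_lt_const ?_ Filter.tendsto_id)
      positivity
    rw [Filter.eventually_cofinite] at hev
    refine hev.subset ?_
    intro g hg
    simp only [Set.mem_setOf_eq, not_lt]
    exact Real.rpow_le_rpow (by positivity) (le_of_lt hg) (by norm_num)
  -- the set of exponents k with w^k a "bad" translate is finite
  have hwinj : Function.Injective fun k : ℤ => w ^ k := by
    intro a b hab
    by_contra hne
    exact hw (a - b) (sub_ne_zero.2 hne) (by
      rw [zpow_sub]
      simp only at hab
      rw [hab]
      simp)
  have hS'fin : {g : G | c0 / 2 < ‖(y : ∀ _ : G, ℂ) (g0 * g)‖}.Finite := by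
    have : {g : G | c0 / 2 < ‖(y : ∀ _ : G, ℂ) (g0 * g)‖}
        = (fun g => g0 * g) ⁻¹' {g : G | c0 / 2 < ‖(y : ∀ _ : G, ℂ) g‖} := rfl
    rw [this]
    exact hSfin.preimage ((mul_right_injective g0).injOn)
  have hKfin : {k : ℤ | c0 / 2 < ‖(y : ∀ _ : G, ℂ) (g0 * w ^ k)‖}.Finite := by
    have : {k : ℤ | c0 / 2 < ‖(y : ∀ _ : G, ℂ) (g0 * w ^ k)‖}
        = (fun k : ℤ => w ^ k) ⁻¹' {g : G | c0 / 2 < ‖(y : ∀ _ : G, ℂ) (g0 * g)‖} := rfl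
    rw [this]
    exact hS'fin.preimage hwinj.injOn
  -- bound the bad exponents
  set N : ℕ := hKfin.toFinset.sup Int.natAbs with hN
  have hNb : ∀ k : ℤ, c0 / 2 < ‖(y : ∀ _ : G, ℂ) (g0 * w ^ k)‖ → k.natAbs ≤ N :=
    fun k hk => Finset.le_sup (hKfin.mem_toFinset.2 hk)
  -- the sequence of exponents
  set a : ℕ → ℤ := fun j => (j : ℤ) * ((N : ℤ) + 1) with ha
  have hgood : ∀ i j : ℕ, i ≠ j → ‖(y : ∀ _ : G, ℂ) (g0 * w ^ (a i - a j))‖ ≤ c0 / 2 := by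
    intro i j hij
    by_contra hcon
    push_neg at hcon
    have h1 : (a i - a j).natAbs ≤ N := hNb _ hcon
    have h2' : a i - a j = ((i : ℤ) - j) * ((N : ℤ) + 1) := by ring
    have h3 : (1 : ℤ) ≤ |(i : ℤ) - j| := by
      have : (i : ℤ) - j ≠ 0 := sub_ne_zero.2 (fun h => hij (by exact_mod_cast h))
      exact Int.one_le_abs this
    have h4 : (N : ℤ) + 1 ≤ |a i - a j| := by
      rw [h2', abs_mul]
      calc (N : ℤ) + 1 = 1 * ((N:ℤ)+1) := by ring
        _ ≤ |(i : ℤ) - j| * |(N : ℤ) + 1| := by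
            apply mul_le_mul h3 (le_abs_self _) (by positivity) (by positivity)
    have h5 : |a i - a j| ≤ (N : ℤ) := by
      rw [Int.abs_eq_natAbs]; exact_mod_cast h1
    omega
  -- separation of the translates of y
  set z : ℕ → lp (fun _ : G => ℂ) 2 := fun n => R (w ^ a n) y with hz
  have hsep : ∀ i j : ℕ, i ≠ j → c0 / 2 ≤ ‖z i - z j‖ := by
    intro i j hij
    have key : ‖(z i - z j : ∀ _ : G, ℂ) (g0 * (w ^ a j)⁻¹)‖ ≤ ‖z i - z j‖ :=
      lp.norm_apply_le_norm (by norm_num) (z i - z j) _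
    have hzj : (z j : ∀ _ : G, ℂ) (g0 * (w ^ a j)⁻¹) = (y : ∀ _ : G, ℂ) g0 := by
      rw [hz]; simp only; rw [hR]; simp
    have hzi : (z i : ∀ _ : G, ℂ) (g0 * (w ^ a j)⁻¹)
        = (y : ∀ _ : G, ℂ) (g0 * w ^ (a i - a j)) := by
      rw [hz]; simp only; rw [hR]
      congr 1
      rw [zpow_sub]
      group
    have hcoords : (z i - z j : ∀ _ : G, ℂ) (g0 * (w ^ a j)⁻¹)
        = (y : ∀ _ : G, ℂ) (g0 * w ^ (a i - a j)) - (y : ∀ _ : G, ℂ) g0 := by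
      simp only [lp.coeFn_sub, Pi.sub_apply, hzi, hzj]
    calc c0 / 2 = c0 - c0 / 2 := by ring
      _ ≤ ‖(y : ∀ _ : G, ℂ) g0‖ - ‖(y : ∀ _ : G, ℂ) (g0 * w ^ (a i - a j))‖ := by
          have := hgood i j hij
          rw [← hc0]
          linarith
      _ ≤ ‖(y : ∀ _ : G, ℂ) (g0 * w ^ (a i - a j)) - (y : ∀ _ : G, ℂ) g0‖ := by
          rw [norm_sub_rev]
          exact norm_sub_norm_le _ _
      _ = ‖(z i - z j : ∀ _ : G, ℂ) (g0 * (w ^ a j)⁻¹)‖ := by rw [hcoords]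
      _ ≤ ‖z i - z j‖ := key
  -- the compactness contradiction
  obtain ⟨r, hr0, hball⟩ := Metric.mem_nhds_iff.1 hKmem
  have hxnorm : 0 < ‖x‖ := by
    rw [norm_pos_iff]
    intro h
    exact hx (by rw [hy, h, map_zero])
  set c : ℝ := r / (2 * ‖x‖) with hc
  have hcpos : 0 < c := by positivity
  set u : ℕ → lp (fun _ : G => ℂ) 2 := fun n => (c : ℂ) • R (w ^ a n) x with hu
  have humem : ∀ n, u n ∈ Metric.ball (0 : lp (fun _ : G => ℂ) 2) r := by
    intro n
    rw [Metric.mem_ball, dist_zero_right, hu]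
    simp only [norm_smul, hiso]
    rw [Complex.norm_real, Real.norm_eq_abs, abs_of_pos hcpos, hc]
    rw [div_mul_eq_mul_div, mul_comm]
    rw [mul_div_assoc]
    calc ‖x‖ * (r / (2 * ‖x‖)) = r / 2 := by field_simp
      _ < r := by linarith
  have hTu : ∀ n, T (u n) = (c : ℂ) • z n := by
    intro n
    rw [hu, hz]
    simp only [map_smul]
    congr 1
    have := hcomm (w ^ a n)
    have := DFunLike.congr_fun this x
    simpa using this
  have hvK : ∀ n, ((c : ℂ) • z n) ∈ K := by
    intro n
    rw [← hTu]
    exact hball (humem n)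
  obtain ⟨l, _, φ, hφ, hlim⟩ := hKc.tendsto_subseq hvK
  rw [Metric.tendsto_atTop] at hlim
  obtain ⟨M, hM⟩ := hlim (c * (c0 / 2) / 2) (by positivity)
  have h1 := hM M le_rfl
  have h2' := hM (M + 1) (by omega)
  have hneq : φ M ≠ φ (M + 1) := fun h => by
    have := hφ.injective h; omega
  have hd : c * (c0 / 2) ≤ dist ((c : ℂ) • z (φ M)) ((c : ℂ) • z (φ (M + 1))) := by
    rw [dist_eq_norm, ← smul_sub, norm_smul, Complex.norm_real, Real.norm_eq_abs,
      abs_of_pos hcpos]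
    exact mul_le_mul_of_nonneg_left (hsep _ _ hneq) hcpos.le
  have htri : dist ((c : ℂ) • z (φ M)) ((c : ℂ) • z (φ (M + 1)))
      ≤ dist ((c : ℂ) • z (φ M)) l + dist ((c : ℂ) • z (φ (M + 1))) l := by
    rw [dist_comm ((c : ℂ) • z (φ (M+1))) l]
    exact dist_triangle _ _ _
  simp only [Function.comp] at h1 h2'
  linarith
end
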